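/- Let T > 0, let ω ∈ ℂ and ρ ∈ ℝ with T²ω² ≠ π² and T²(ω − iρ)² ≠ π², let C ∈ ℂ and R₁, R₂ ∈ ℝ, and let g(t) = sin(πt/T) on [0,T], g(t) = 0 otherwise. Then ∫₀^∞ g(t) ( C e^{iωt} + conj(C) e^{−i conj(ω) t} ) ( R₁ + R₂ e^{ρt} ) dt = 2 R₁ Re[ C (1 + e^{iωT}) G(ω) ] + 2 R₂ Re[ C (1 + e^{(iω + ρ)T}) G(ω − iρ) ], where G(w) = −Tπ/(T²w² − π²). -/

import Mathlib

open MeasureTheory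


lemma key_integral (T : ℝ) (hT : 0 < T) (z : ℂ)
    (hz : (T:ℂ)^2*z^2 + (Real.pi:ℂ)^2 ≠ 0) :
    ∫ t in (0:ℝ)..T, (Real.sin (Real.pi * t / T) : ℂ) * Complex.exp (z * t)
      = (1 + Complex.exp (z*T)) * ((T:ℂ)*(Real.pi:ℂ)) / ((T:ℂ)^2*z^2 + (Real.pi:ℂ)^2) := by
  have hT0 : (T:ℂ) ≠ 0 := by exact_mod_cast hT.ne'
  set b : ℂ := (Real.pi:ℂ)/T with hb
  have hbT : b * T = (Real.pi:ℂ) := by rw [hb]; exact div_mul_cancel₀ _ hT0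
  have hfac : (T:ℂ)^2*z^2 + (Real.pi:ℂ)^2 = (T:ℂ)^2*((z - b*Complex.I)*(z + b*Complex.I)) := by
    have h1 : (z - b*Complex.I)*(z + b*Complex.I) = z^2 + b^2 := by
      linear_combination (-b^2) * Complex.I_sq
    rw [h1, ← hbT]; ring
  have hz1 : z - b*Complex.I ≠ 0 := by
    intro h; apply hz; rw [hfac, h]; ring
  have hz2 : z + b*Complex.I ≠ 0 := by
    intro h; apply hz; rw [hfac, h]; ring
  have hpt : ∀ t : ℝ, (Real.sin (Real.pi * t / T) : ℂ) * Complex.exp (z * t)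
      = Complex.I/2 * (Complex.exp ((z - b*Complex.I) * t) - Complex.exp ((z + b*Complex.I) * t)) := by
    intro t
    have h2 : ((Real.pi * t / T : ℝ) : ℂ) = b * t := by push_cast [hb]; ring
    rw [Complex.ofReal_sin, h2, Complex.sin]
    rw [show (z - b*Complex.I)*(t:ℂ) = (-(b*t)*Complex.I) + z*t by ring,
        show (z + b*Complex.I)*(t:ℂ) = ((b*t)*Complex.I) + z*t by ring,
        Complex.exp_add, Complex.exp_add]
    ring
  simp_rw [hpt]
  rw [intervalIntegral.integral_const_mul, intervalIntegral.integral_sub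
      ((Continuous.intervalIntegrable (by fun_prop) 0 T :
        IntervalIntegrable (fun t : ℝ => Complex.exp ((z - b*Complex.I) * t)) volume 0 T))
      ((Continuous.intervalIntegrable (by fun_prop) 0 T :
        IntervalIntegrable (fun t : ℝ => Complex.exp ((z + b*Complex.I) * t)) volume 0 T)),
    integral_exp_mul_complex hz1, integral_exp_mul_complex hz2]
  have e1 : Complex.exp ((z - b*Complex.I)*(T:ℂ)) = -Complex.exp (z*T) := by
    rw [show (z - b*Complex.I)*(T:ℂ) = z*T + -((Real.pi:ℂ)*Complex.I) by
      linear_combination (-Complex.I) * hbT]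
    simp [Complex.exp_add, Complex.exp_neg, Complex.exp_pi_mul_I]
  have e2 : Complex.exp ((z + b*Complex.I)*(T:ℂ)) = -Complex.exp (z*T) := by
    rw [show (z + b*Complex.I)*(T:ℂ) = z*T + (Real.pi:ℂ)*Complex.I by
      linear_combination Complex.I * hbT]
    simp [Complex.exp_add, Complex.exp_pi_mul_I]
  rw [e1, e2, hfac, ← hbT]
  simp only [Complex.ofReal_zero, mul_zero, Complex.exp_zero]
  rw [div_sub_div _ _ hz1 hz2, mul_div_assoc', div_eq_div_iff (mul_ne_zero hz1 hz2)
    (mul_ne_zero (pow_ne_zero 2 hT0) (mul_ne_zero hz1 hz2))]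
  linear_combination (-(1 + Complex.exp (z*T)) * (z - b*Complex.I) * (z + b*Complex.I) * b * T^2) * Complex.I_sq



/-- Cross-term identity: for `T > 0`, `ω ∈ ℂ`, `ρ ∈ ℝ` with `T²ω² ≠ π²` and
`T²(ω - iρ)² ≠ π²`, `C ∈ ℂ`, `R₁, R₂ ∈ ℝ`, with `g(t) = sin(πt/T)` on `[0,T]`, `0` otherwise:
`∫₀^∞ g(t)(C e^{iωt} + conj(C) e^{-i conj(ω) t})(R₁ + R₂ e^{ρt}) dt`
`= 2R₁ Re[C(1 + e^{iωT})G(ω)] + 2R₂ Re[C(1 + e^{(iω+ρ)T})G(ω - iρ)]`,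
where `G(w) = -Tπ/(T²w² - π²)`. -/
theorem stmt9 (T : ℝ) (hT : 0 < T) (ω : ℂ) (ρ : ℝ)
    (hω : (T : ℂ)^2 * ω^2 ≠ (Real.pi : ℂ)^2)
    (hωρ : (T : ℂ)^2 * (ω - Complex.I * (ρ : ℂ))^2 ≠ (Real.pi : ℂ)^2)
    (C : ℂ) (R₁ R₂ : ℝ)
    (g : ℝ → ℝ)
    (hg : ∀ t : ℝ, g t = if t ∈ Set.Icc (0:ℝ) T then Real.sin (Real.pi * t / T) else 0)
    (G : ℂ → ℂ)
    (hG : ∀ w : ℂ, G w = -((T : ℂ) * (Real.pi : ℂ)) / ((T : ℂ)^2 * w^2 - (Real.pi : ℂ)^2)) :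
    (∫ t in Set.Ioi (0:ℝ),
        g t * (C * Complex.exp (Complex.I * ω * (t : ℂ))
            + (starRingEnd ℂ) C
              * Complex.exp (-Complex.I * (starRingEnd ℂ) ω * (t : ℂ))).re
          * (R₁ + R₂ * Real.exp (ρ * t)))
      = 2 * R₁ * (C * (1 + Complex.exp (Complex.I * ω * (T : ℂ))) * G ω).re
        + 2 * R₂ * (C * (1 + Complex.exp ((Complex.I * ω + (ρ : ℂ)) * (T : ℂ)))
            * G (ω - Complex.I * (ρ : ℂ))).re := by
  set z₁ : ℂ := Complex.I * ω with hz₁def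
  set z₂ : ℂ := Complex.I * ω + (ρ:ℂ) with hz₂def
  set f : ℝ → ℝ := fun t => g t * (C * Complex.exp (z₁ * (t : ℂ))
            + (starRingEnd ℂ) C
              * Complex.exp (-Complex.I * (starRingEnd ℂ) ω * (t : ℂ))).re
          * (R₁ + R₂ * Real.exp (ρ * t)) with hf
  set h : ℝ → ℂ := fun t => 2*C*((Real.sin (Real.pi * t / T) : ℂ)) *
      ((R₁:ℂ) * Complex.exp (z₁ * (t:ℂ)) + (R₂:ℂ) * Complex.exp (z₂ * (t:ℂ))) with hh
  have hz1 : (T:ℂ)^2*z₁^2 + (Real.pi:ℂ)^2 ≠ 0 := by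
    intro hcon; apply hω
    rw [hz₁def] at hcon
    linear_combination -hcon + (T:ℂ)^2*ω^2 * Complex.I_sq
  have hz2 : (T:ℂ)^2*z₂^2 + (Real.pi:ℂ)^2 ≠ 0 := by
    intro hcon; apply hωρ
    rw [hz₂def] at hcon
    linear_combination -hcon + (T:ℂ)^2*(ω^2+(ρ:ℂ)^2) * Complex.I_sq
  have key1 := key_integral T hT z₁ hz1
  have key2 := key_integral T hT z₂ hz2
  -- step 1: reduce to interval integral
  have hvan : ∀ t : ℝ, f t = (Set.Ioc (0:ℝ) T).indicator f t := by
    intro t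
    by_cases ht : t ∈ Set.Ioc (0:ℝ) T
    · rw [Set.indicator_of_mem ht]
    · rw [Set.indicator_of_notMem ht, hf]
      simp only
      rw [hg t]
      by_cases ht2 : t ∈ Set.Icc (0:ℝ) T
      · have ht0 : t = 0 := le_antisymm (by
          rcases ht2 with ⟨h1, h2⟩
          by_contra hcon
          exact ht ⟨not_le.mp hcon, h2⟩) (ht2.1)
        simp [ht0]
      · simp [ht2]
  have step1 : (∫ t in Set.Ioi (0:ℝ), f t) = ∫ t in (0:ℝ)..T, f t := by
    calc (∫ t in Set.Ioi (0:ℝ), f t)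
        = ∫ t in Set.Ioi (0:ℝ), (Set.Ioc (0:ℝ) T).indicator f t := by
          exact integral_congr_ae (Filter.Eventually.of_forall fun t => hvan t)
      _ = ∫ t in Set.Ioi (0:ℝ) ∩ Set.Ioc (0:ℝ) T, f t := setIntegral_indicator measurableSet_Ioc
      _ = ∫ t in Set.Ioc (0:ℝ) T, f t := by
          rw [Set.inter_eq_self_of_subset_right Set.Ioc_subset_Ioi_self]
      _ = ∫ t in (0:ℝ)..T, f t := (intervalIntegral.integral_of_le hT.le).symm
  -- step 2: f = re ∘ h on [0, T]
  have hrep : ∀ t ∈ Set.uIcc (0:ℝ) T, f t = (h t).re := by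
    intro t ht
    rw [Set.uIcc_of_le hT.le] at ht
    have hgt : g t = Real.sin (Real.pi * t / T) := by rw [hg t, if_pos ht]
    have hc : Complex.exp (-Complex.I * (starRingEnd ℂ) ω * (t:ℂ))
        = (starRingEnd ℂ) (Complex.exp (z₁ * (t:ℂ))) := by
      rw [← Complex.exp_conj]
      congr 1
      rw [hz₁def]
      simp [map_mul, Complex.conj_I, Complex.conj_ofReal]
    have hsum : (C * Complex.exp (z₁ * (t:ℂ)) + (starRingEnd ℂ) C
        * Complex.exp (-Complex.I * (starRingEnd ℂ) ω * (t:ℂ))).re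
        = 2 * (C * Complex.exp (z₁ * (t:ℂ))).re := by
      rw [hc, ← map_mul, Complex.add_conj]
      simp
    have hht : h t = ((Real.sin (Real.pi * t / T) * (R₁ + R₂ * Real.exp (ρ*t)) * 2 : ℝ) : ℂ)
        * (C * Complex.exp (z₁ * (t:ℂ))) := by
      rw [hh]
      simp only
      rw [show z₂ * (t:ℂ) = z₁ * (t:ℂ) + ((ρ*t : ℝ) : ℂ) by rw [hz₁def, hz₂def]; push_cast; ring,
        Complex.exp_add, ← Complex.ofReal_exp]
      push_cast
      ring
    rw [hf]
    simp only
    rw [hgt, hsum, hht, Complex.re_ofReal_mul]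
    ring
  have step2 : (∫ t in (0:ℝ)..T, f t) = ∫ t in (0:ℝ)..T, (h t).re :=
    intervalIntegral.integral_congr hrep
  -- step 3: pull re out
  have hcont : Continuous h := by
    rw [hh]; fun_prop
  have step3 : (∫ t in (0:ℝ)..T, (h t).re) = (∫ t in (0:ℝ)..T, h t).re := by
    have hi : IntervalIntegrable h volume 0 T := hcont.intervalIntegrable 0 T
    have := ContinuousLinearMap.intervalIntegral_comp_comm Complex.reCLM hi
    simpa using this
  -- step 4: compute complex integral
  have hint1 : IntervalIntegrable (fun t : ℝ => (Real.sin (Real.pi * t / T) : ℂ)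
      * Complex.exp (z₁ * (t:ℂ))) volume 0 T := by
    exact Continuous.intervalIntegrable (by fun_prop) 0 T
  have hint2 : IntervalIntegrable (fun t : ℝ => (Real.sin (Real.pi * t / T) : ℂ)
      * Complex.exp (z₂ * (t:ℂ))) volume 0 T := by
    exact Continuous.intervalIntegrable (by fun_prop) 0 T
  have step4 : (∫ t in (0:ℝ)..T, h t)
      = 2*C*(R₁:ℂ) * ((1 + Complex.exp (z₁*(T:ℂ))) * ((T:ℂ)*(Real.pi:ℂ)) / ((T:ℂ)^2*z₁^2 + (Real.pi:ℂ)^2))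
      + 2*C*(R₂:ℂ) * ((1 + Complex.exp (z₂*(T:ℂ))) * ((T:ℂ)*(Real.pi:ℂ)) / ((T:ℂ)^2*z₂^2 + (Real.pi:ℂ)^2)) := by
    have hsp : ∀ t : ℝ, h t = 2*C*(R₁:ℂ) * ((Real.sin (Real.pi * t / T) : ℂ) * Complex.exp (z₁ * (t:ℂ)))
        + 2*C*(R₂:ℂ) * ((Real.sin (Real.pi * t / T) : ℂ) * Complex.exp (z₂ * (t:ℂ))) := by
      intro t; rw [hh]; ring
    rw [show (fun t : ℝ => h t) = _ from funext hsp]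
    rw [intervalIntegral.integral_add (hint1.const_mul _) (hint2.const_mul _),
      intervalIntegral.integral_const_mul, intervalIntegral.integral_const_mul, key1, key2]
  -- final algebra
  rw [step1, step2, step3, step4, hG, hG]
  have d1 : (T:ℂ)^2*z₁^2 + (Real.pi:ℂ)^2 = -((T:ℂ)^2*ω^2 - (Real.pi:ℂ)^2) := by
    rw [hz₁def]; linear_combination (T:ℂ)^2*ω^2 * Complex.I_sq
  have d2 : (T:ℂ)^2*z₂^2 + (Real.pi:ℂ)^2
      = -((T:ℂ)^2*(ω - Complex.I*(ρ:ℂ))^2 - (Real.pi:ℂ)^2) := by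
    rw [hz₂def]; linear_combination (T:ℂ)^2*(ω^2+(ρ:ℂ)^2) * Complex.I_sq
  rw [d1, d2, div_neg, div_neg]
  rw [show 2*C*(R₁:ℂ) * -((1 + Complex.exp (z₁*(T:ℂ))) * ((T:ℂ)*(Real.pi:ℂ)) / ((T:ℂ)^2*ω^2 - (Real.pi:ℂ)^2))
      + 2*C*(R₂:ℂ) * -((1 + Complex.exp (z₂*(T:ℂ))) * ((T:ℂ)*(Real.pi:ℂ)) / ((T:ℂ)^2*(ω - Complex.I*(ρ:ℂ))^2 - (Real.pi:ℂ)^2))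
      = ((2*R₁ : ℝ) : ℂ) * (C * (1 + Complex.exp (z₁*(T:ℂ)))
          * (-((T:ℂ)*(Real.pi:ℂ)) / ((T:ℂ)^2*ω^2 - (Real.pi:ℂ)^2)))
        + ((2*R₂ : ℝ) : ℂ) * (C * (1 + Complex.exp (z₂*(T:ℂ)))
          * (-((T:ℂ)*(Real.pi:ℂ)) / ((T:ℂ)^2*(ω - Complex.I*(ρ:ℂ))^2 - (Real.pi:ℂ)^2))) by
    push_cast; ring]
  rw [Complex.add_re, Complex.re_ofReal_mul, Complex.re_ofReal_mul]
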